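/- Let $H \in [0,1)$ and $\rho > 0$, and define $x_\rho(t) = \dfrac{H\cosh(2\rho+2t) + \sinh(2\rho) - H\cosh(2\rho)}{\sinh(2\rho+2t)}$ for $t \ge 0$. Then $x_\rho(0) = 1$ and $0 < x_\rho(t) < 1$ for every $t > 0$. -/

import Mathlib

open Real

/-- For `H ∈ [0,1)` and `ρ > 0`, the function
`x_ρ(t) = (H cosh(2ρ+2t) + sinh(2ρ) - H cosh(2ρ)) / sinh(2ρ+2t)`
satisfies `x_ρ(0) = 1` and `0 < x_ρ(t) < 1` for all `t > 0`. -/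
theorem stmt_3 (H ρ : ℝ) (hH : H ∈ Set.Ico (0 : ℝ) 1) (hρ : 0 < ρ)
    (x : ℝ → ℝ)
    (hx : ∀ t, x t = (H * Real.cosh (2 * ρ + 2 * t) + Real.sinh (2 * ρ) -
      H * Real.cosh (2 * ρ)) / Real.sinh (2 * ρ + 2 * t)) :
    x 0 = 1 ∧ ∀ t > 0, 0 < x t ∧ x t < 1 := by
  obtain ⟨hH0, hH1⟩ := hH
  have hs : 0 < 2 * ρ := by linarith
  have hsinh_s : 0 < Real.sinh (2 * ρ) := Real.sinh_pos_iff.mpr hs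
  constructor
  · rw [hx 0]
    field_simp
    simp only [add_zero]
    ring

  · intro t ht
    have hu : 2 * ρ < 2 * ρ + 2 * t := by linarith
    have hu0 : 0 < 2 * ρ + 2 * t := by linarith
    have hsinh_u : 0 < Real.sinh (2 * ρ + 2 * t) := Real.sinh_pos_iff.mpr hu0
    have hcosh : Real.cosh (2 * ρ) < Real.cosh (2 * ρ + 2 * t) := by
      rw [Real.cosh_lt_cosh]
      rw [abs_of_pos hs, abs_of_pos hu0]; exact hu
    have hsinh : Real.sinh (2 * ρ) < Real.sinh (2 * ρ + 2 * t) :=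
      Real.sinh_lt_sinh.mpr hu
    have hexp : Real.exp (-(2 * ρ + 2 * t)) < Real.exp (-(2 * ρ)) :=
      Real.exp_lt_exp.mpr (by linarith)
    have hkey : Real.cosh (2 * ρ + 2 * t) - Real.sinh (2 * ρ + 2 * t)
        < Real.cosh (2 * ρ) - Real.sinh (2 * ρ) := by
      rw [Real.cosh_sub_sinh, Real.cosh_sub_sinh]; exact hexp
    rw [hx t]
    constructor
    · apply div_pos _ hsinh_u
      nlinarith
    · rw [div_lt_one hsinh_u]
      nlinarith
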